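/- (Unbiasedness of the over-the-air estimator.) Consider the scheme described in the context: a_k ∈ [0,P] for k = 1,…,K, transmit symbols X_k(m) = √(a_k)·U_k(m) with U_k(m) (k ≤ K, m ≤ M) i.i.d. uniform on {−1,+1}, channel outputs Y(m) = Σ_{k=1}^K H_k(m)·X_k(m) + N(m), where the random signs {U_k(m)} are independent of the pair (H, N), each of the 2KM real random variables H_k^r(m), H_k^i(m) has mean zero and variance 1, the noise components have finite second moments, and 𝔼[H_k^j(m)·N^{j'}(m')] exists for all indices. Then 𝔼[Σ_{m=1}^M |Y(m)|²] = 2M·Σ_{k=1}^K a_k + 𝔼[Σ_{m=1}^M |N(m)|²]. Consequently, with a_k = (P/Δ(f))·(f_k(s_k) − φ_min,k) and ḡ(t) := (Δ(f)/(2·M·P))·t + Σ_{k=1}^K φ_min,k, one has 𝔼[ḡ(‖Y‖² − 𝔼‖N‖²)] = Σ_{k=1}^K f_k(s_k). -/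

import Mathlib

open MeasureTheory ProbabilityTheory Matrix Real

/-- Euclidean norm of a finitely-indexed real vector. -/
noncomputable def eucNorm {n : Type*} [Fintype n] (v : n → ℝ) : ℝ :=
  Real.sqrt (∑ i, (v i) ^ 2)

/-- Operator (spectral) norm of a real matrix. -/
noncomputable def opNorm {m n : Type*} [Fintype m] [Fintype n] (A : Matrix m n ℝ) : ℝ :=
  sSup {r : ℝ | ∃ x : n → ℝ, eucNorm x ≤ 1 ∧ r = eucNorm (A.mulVec x)}

/-- Frobenius norm of a real matrix. -/
noncomputable def frobNorm {m n : Type*} [Fintype m] [Fintype n] (A : Matrix m n ℝ) : ℝ :=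
  Real.sqrt (∑ i, ∑ j, (A i j) ^ 2)

/-- The sub-gaussian norm of a real random variable. -/
noncomputable def subgaussNorm {Ω : Type*} [MeasurableSpace Ω] (μ : Measure Ω)
    (X : Ω → ℝ) : ℝ :=
  sInf {t : ℝ | 0 < t ∧
    ∀ l : ℝ, ∫ ω, Real.exp (l * (X ω - ∫ ω', X ω' ∂μ)) ∂μ ≤ Real.exp (l ^ 2 * t ^ 2 / 2)}

noncomputable def phiMin (S : Set ℝ) (g : ℝ → ℝ) : ℝ := sInf (g '' S)

noncomputable def phiMax (S : Set ℝ) (g : ℝ → ℝ) : ℝ := sSup (g '' S)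

/-- Total spread `Δ̄(f)` of the inner part of a nomographic representation. -/
noncomputable def totalSpread {K : ℕ} (S : Fin K → Set ℝ) (fk : Fin K → ℝ → ℝ) : ℝ :=
  ∑ k, (phiMax (S k) (fk k) - phiMin (S k) (fk k))

/-- Max-spread `Δ(f)` of the inner part of a nomographic representation. -/
noncomputable def maxSpread {K : ℕ} (S : Fin K → Set ℝ) (fk : Fin K → ℝ → ℝ) : ℝ :=
  ⨆ k, (phiMax (S k) (fk k) - phiMin (S k) (fk k))

/-- The mean of a Rademacher random variable is zero. -/
lemma rad_mean {Ω : Type} [MeasurableSpace Ω] (μ : Measure Ω) [IsProbabilityMeasure μ]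
    (V : Ω → ℝ) (hmeas : Measurable V) (hsign : ∀ ω, V ω = 1 ∨ V ω = -1)
    (hunif : μ {ω | V ω = 1} = 1 / 2) : ∫ ω, V ω ∂μ = 0 := by
  have hA : MeasurableSet {ω | V ω = 1} := hmeas (measurableSet_singleton 1)
  have hEq : V = fun ω => 2 * Set.indicator {ω | V ω = 1} (fun _ => (1 : ℝ)) ω - 1 := by
    funext ω
    rcases hsign ω with h | h <;>
      simp [Set.indicator_apply, Set.mem_setOf_eq, h] <;> norm_num
  have hind : Integrable (Set.indicator {ω | V ω = 1} (fun _ => (1 : ℝ))) μ :=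
    (integrable_const (1 : ℝ)).indicator hA
  rw [hEq, integral_sub (hind.const_mul 2) (integrable_const 1), integral_const_mul,
    integral_indicator_const _ hA, integral_const, measureReal_def, measureReal_def, hunif]
  simp only [measure_univ, ENNReal.toReal_one, smul_eq_mul, one_mul, mul_one]
  rw [ENNReal.toReal_div]
  norm_num

/-- **Unbiasedness of the over-the-air estimator**: the expected received energy equals
`2M·Σ_k a_k` plus the expected noise energy, and consequently the post-processed
statistic `ḡ(‖Y‖² − 𝔼‖N‖²)` is an unbiased estimate of `Σ_k f_k(s_k)`.  Here `H ω m j k`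
is the real (`j = 0`) resp. imaginary (`j = 1`) part of the fading coefficient of user
`k` at channel use `m`, and `Noise ω m j` the corresponding part of the additive noise. -/
theorem ota_estimator_unbiased
    {Ω : Type} [MeasurableSpace Ω] (μ : Measure Ω) [IsProbabilityMeasure μ]
    (K M : ℕ) (hM : 0 < M) (P : ℝ) (hP : 0 < P)
    -- fading and noise
    (H : Ω → Fin M → Fin 2 → Fin K → ℝ) (Noise : Ω → Fin M → Fin 2 → ℝ)
    (hHmeas : ∀ m j k, Measurable fun ω => H ω m j k)
    (hNmeas : ∀ m j, Measurable fun ω => Noise ω m j)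
    (hHmean : ∀ m j k, ∫ ω, H ω m j k ∂μ = 0)
    (hHvar : ∀ m j k, ∫ ω, (H ω m j k) ^ 2 ∂μ = 1)
    (hHsq : ∀ m j k, Integrable (fun ω => (H ω m j k) ^ 2) μ)
    (hNsq : ∀ m j, Integrable (fun ω => (Noise ω m j) ^ 2) μ)
    (hHN : ∀ m j k m' j', Integrable (fun ω => H ω m j k * Noise ω m' j') μ)
    -- i.i.d. Rademacher signs, independent of the pair (H, N)
    (U : Ω → Fin K → Fin M → ℝ)
    (hUmeas : ∀ k m, Measurable fun ω => U ω k m)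
    (hUsign : ∀ ω k m, U ω k m = 1 ∨ U ω k m = -1)
    (hUunif : ∀ k m, μ {ω | U ω k m = 1} = 1 / 2)
    (hUindep : iIndepFun
      (fun (p : Fin K × Fin M) ω => U ω p.1 p.2) μ)
    (hUHN : IndepFun U (fun ω => (H ω, Noise ω)) μ)
    -- transmit powers and channel outputs
    (a : Fin K → ℝ) (ha : ∀ k, a k ∈ Set.Icc 0 P)
    (Y : Ω → Fin M → Fin 2 → ℝ)
    (hY : ∀ ω m j, Y ω m j =
      (∑ k, H ω m j k * (Real.sqrt (a k) * U ω k m)) + Noise ω m j) :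
    -- expected received energy
    (∫ ω, ∑ m, ∑ j, (Y ω m j) ^ 2 ∂μ
      = 2 * M * (∑ k, a k) + ∫ ω, ∑ m, ∑ j, (Noise ω m j) ^ 2 ∂μ)
    -- consequently, `𝔼[ḡ(‖Y‖² − 𝔼‖N‖²)] = Σ_k f_k(s_k)`
    ∧ ∀ (S : Fin K → Set ℝ) (fk : Fin K → ℝ → ℝ) (s : Fin K → ℝ),
        (∀ k, s k ∈ S k) →
        (∀ k, BddAbove (fk k '' S k)) → (∀ k, BddBelow (fk k '' S k)) →
        0 < maxSpread S fk →
        (∀ k, a k = P / maxSpread S fk * (fk k (s k) - phiMin (S k) (fk k))) →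
        ∫ ω, (maxSpread S fk / (2 * M * P) * ((∑ m, ∑ j, (Y ω m j) ^ 2)
              - ∫ ω', ∑ m, ∑ j, (Noise ω' m j) ^ 2 ∂μ)
            + ∑ k, phiMin (S k) (fk k)) ∂μ
          = ∑ k, fk k (s k) := by
  classical
  -- basic facts about U
  have hUabs : ∀ ω k m, |U ω k m| = 1 := fun ω k m => by
    rcases hUsign ω k m with h | h <;> simp [h]
  have hUint : ∀ k m, Integrable (fun ω => U ω k m) μ := fun k m =>
    (integrable_const (1 : ℝ)).mono' (hUmeas k m).aestronglyMeasurable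
      (ae_of_all _ fun ω => by rw [Real.norm_eq_abs, hUabs])
  have hUmean : ∀ k m, ∫ ω, U ω k m ∂μ = 0 := fun k m =>
    rad_mean μ _ (hUmeas k m) (fun ω => hUsign ω k m) (hUunif k m)
  -- integrability of products
  have hUUint : ∀ k l m, Integrable (fun ω => U ω k m * U ω l m) μ := fun k l m =>
    (integrable_const (1 : ℝ)).mono' ((hUmeas k m).mul (hUmeas l m)).aestronglyMeasurable
      (ae_of_all _ fun ω => by
        rw [Real.norm_eq_abs, abs_mul, hUabs, hUabs, mul_one])
  have hHH : ∀ m j k l, Integrable (fun ω => H ω m j k * H ω m j l) μ := by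
    intro m j k l
    refine ((hHsq m j k).add (hHsq m j l)).mono'
      (((hHmeas m j k).mul (hHmeas m j l)).aestronglyMeasurable)
      (ae_of_all _ fun ω => ?_)
    simp only [Pi.add_apply]
    rw [Real.norm_eq_abs, abs_mul]
    have h1 := sq_nonneg (|H ω m j k| - |H ω m j l|)
    have h2 := sq_abs (H ω m j k)
    have h3 := sq_abs (H ω m j l)
    nlinarith [abs_nonneg (H ω m j k), abs_nonneg (H ω m j l)]
  -- mean of products of distinct signs
  have hUUmean : ∀ k l m, k ≠ l → ∫ ω, U ω k m * U ω l m ∂μ = 0 := by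
    intro k l m hkl
    have hne : ((k, m) : Fin K × Fin M) ≠ (l, m) := by
      simp [Prod.ext_iff, hkl]
    have hind := hUindep.indepFun hne
    have := hind.integral_mul_eq_mul_integral (hUint k m).aestronglyMeasurable (hUint l m).aestronglyMeasurable
    simpa [Pi.mul_apply, hUmean k m] using this
  -- independence transfer lemmas
  have happly : ∀ (k : Fin K) (m : Fin M),
      Measurable fun u : Fin K → Fin M → ℝ => u k m := fun k m => by fun_prop
  have hHapply : ∀ (m : Fin M) (j : Fin 2) (k : Fin K),
      Measurable fun p : (Fin M → Fin 2 → Fin K → ℝ) × (Fin M → Fin 2 → ℝ) => p.1 m j k :=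
    fun m j k => by fun_prop
  have hNapply : ∀ (m : Fin M) (j : Fin 2),
      Measurable fun p : (Fin M → Fin 2 → Fin K → ℝ) × (Fin M → Fin 2 → ℝ) => p.2 m j :=
    fun m j => by fun_prop
  -- key product integral: UU x HH
  have hUUHH : ∀ (m : Fin M) (j : Fin 2) (k l : Fin K), k ≠ l →
      ∫ ω, (U ω k m * U ω l m) * (H ω m j k * H ω m j l) ∂μ = 0 := by
    intro m j k l hkl
    have hφ : Measurable fun u : Fin K → Fin M → ℝ => u k m * u l m :=
      (happly k m).mul (happly l m)
    have hψ : Measurable fun p : (Fin M → Fin 2 → Fin K → ℝ) × (Fin M → Fin 2 → ℝ) =>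
        p.1 m j k * p.1 m j l := (hHapply m j k).mul (hHapply m j l)
    have hind := hUHN.comp hφ hψ
    have h := hind.integral_mul_eq_mul_integral (hUUint k l m).aestronglyMeasurable (hHH m j k l).aestronglyMeasurable
    have h' : ∫ ω, (U ω k m * U ω l m) * (H ω m j k * H ω m j l) ∂μ
        = (∫ ω, U ω k m * U ω l m ∂μ) * ∫ ω, H ω m j k * H ω m j l ∂μ := h
    rw [h', hUUmean k l m hkl, zero_mul]
  -- key product integral: U x HN
  have hUHNzero : ∀ (m : Fin M) (j : Fin 2) (k : Fin K),
      ∫ ω, U ω k m * (H ω m j k * Noise ω m j) ∂μ = 0 := by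
    intro m j k
    have hφ : Measurable fun u : Fin K → Fin M → ℝ => u k m := happly k m
    have hψ : Measurable fun p : (Fin M → Fin 2 → Fin K → ℝ) × (Fin M → Fin 2 → ℝ) =>
        p.1 m j k * p.2 m j := (hHapply m j k).mul (hNapply m j)
    have hind := hUHN.comp hφ hψ
    have h := hind.integral_mul_eq_mul_integral (hUint k m).aestronglyMeasurable (hHN m j k m j).aestronglyMeasurable
    have h' : ∫ ω, U ω k m * (H ω m j k * Noise ω m j) ∂μ
        = (∫ ω, U ω k m ∂μ) * ∫ ω, H ω m j k * Noise ω m j ∂μ := h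
    rw [h', hUmean k m, zero_mul]
  -- per-(m,j) key result
  have key : ∀ m j, Integrable (fun ω => (Y ω m j) ^ 2) μ ∧
      ∫ ω, (Y ω m j) ^ 2 ∂μ = (∑ k, a k) + ∫ ω, (Noise ω m j) ^ 2 ∂μ := by
    intro m j
    set T1 : Fin K → Fin K → Ω → ℝ := fun k l ω =>
      (Real.sqrt (a k) * Real.sqrt (a l)) *
        ((U ω k m * U ω l m) * (H ω m j k * H ω m j l)) with hT1
    set T2 : Fin K → Ω → ℝ := fun k ω =>
      (2 * Real.sqrt (a k)) * (U ω k m * (H ω m j k * Noise ω m j)) with hT2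
    have hT1int : ∀ k l, Integrable (T1 k l) μ := by
      intro k l
      refine Integrable.const_mul ?_ _
      refine ((hHH m j k l).bdd_mul (c := 1)
        ((hUmeas k m).mul (hUmeas l m)).aestronglyMeasurable (ae_of_all _ fun ω => ?_))
      rw [Real.norm_eq_abs, abs_mul, hUabs, hUabs, mul_one]
    have hT2int : ∀ k, Integrable (T2 k) μ := by
      intro k
      refine Integrable.const_mul ?_ _
      refine ((hHN m j k m j).bdd_mul (c := 1) (hUmeas k m).aestronglyMeasurable (ae_of_all _ fun ω => ?_))
      rw [Real.norm_eq_abs, hUabs]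
    have hT1val : ∀ k l, ∫ ω, T1 k l ω ∂μ = if k = l then a k else 0 := by
      intro k l
      by_cases hkl : k = l
      · subst hkl
        have heq : T1 k k = fun ω => a k * (H ω m j k) ^ 2 := by
          funext ω
          have hu : U ω k m * U ω k m = 1 := by
            rcases hUsign ω k m with h | h <;> simp [h]
          have hsq : Real.sqrt (a k) * Real.sqrt (a k) = a k :=
            Real.mul_self_sqrt (ha k).1
          simp only [hT1, hu, hsq, one_mul]
          ring
        rw [heq, integral_const_mul, hHvar m j k, mul_one, if_pos rfl]
      · simp only [hT1]
        rw [integral_const_mul, hUUHH m j k l hkl, mul_zero, if_neg hkl]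
    have hT2val : ∀ k, ∫ ω, T2 k ω ∂μ = 0 := by
      intro k
      simp only [hT2]
      rw [integral_const_mul, hUHNzero m j k, mul_zero]
    have hexp : ∀ ω, (Y ω m j) ^ 2 =
        (∑ k, ∑ l, T1 k l ω) + ((∑ k, T2 k ω) + (Noise ω m j) ^ 2) := by
      intro ω
      rw [hY ω m j, add_sq]
      have e1 : (∑ k, H ω m j k * (Real.sqrt (a k) * U ω k m)) ^ 2
          = ∑ k, ∑ l, T1 k l ω := by
        rw [sq, Finset.sum_mul_sum]
        exact Finset.sum_congr rfl fun k _ => Finset.sum_congr rfl fun l _ => by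
          simp only [hT1]; ring
      have e2 : 2 * (∑ k, H ω m j k * (Real.sqrt (a k) * U ω k m)) * Noise ω m j
          = ∑ k, T2 k ω := by
        rw [mul_assoc, Finset.sum_mul, Finset.mul_sum]
        exact Finset.sum_congr rfl fun k _ => by simp only [hT2]; ring
      rw [e1, e2]; ring
    have hfun : (fun ω => (Y ω m j) ^ 2) =
        fun ω => (∑ k, ∑ l, T1 k l ω) + ((∑ k, T2 k ω) + (Noise ω m j) ^ 2) :=
      funext hexp
    have hint1 : Integrable (fun ω => ∑ k, ∑ l, T1 k l ω) μ :=
      integrable_finset_sum _ fun k _ => integrable_finset_sum _ fun l _ => hT1int k l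
    have hint2 : Integrable (fun ω => ∑ k, T2 k ω) μ :=
      integrable_finset_sum _ fun k _ => hT2int k
    constructor
    · rw [hfun]
      exact hint1.add (hint2.add (hNsq m j))
    · have hint3 : Integrable (fun ω => (∑ k, T2 k ω) + (Noise ω m j) ^ 2) μ :=
        hint2.add (hNsq m j)
      rw [hfun, integral_add hint1 hint3,
        integral_add hint2 (hNsq m j),
        integral_finset_sum _ fun k _ => integrable_finset_sum _ fun l _ => hT1int k l,
        integral_finset_sum _ fun k _ => hT2int k]
      have h1 : ∑ k, ∫ ω, ∑ l, T1 k l ω ∂μ = ∑ k, a k := by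
        refine Finset.sum_congr rfl fun k _ => ?_
        rw [integral_finset_sum _ fun l _ => hT1int k l]
        simp [hT1val]
      have h2 : ∑ k, ∫ ω, T2 k ω ∂μ = 0 := by simp [hT2val]
      rw [h1, h2, zero_add]
  -- first part
  have hQint : Integrable (fun ω => ∑ m, ∑ j, (Y ω m j) ^ 2) μ :=
    integrable_finset_sum _ fun m _ => integrable_finset_sum _ fun j _ => (key m j).1
  have hNint : Integrable (fun ω => ∑ m, ∑ j, (Noise ω m j) ^ 2) μ :=
    integrable_finset_sum _ fun m _ => integrable_finset_sum _ fun j _ => hNsq m j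
  have part1 : ∫ ω, ∑ m, ∑ j, (Y ω m j) ^ 2 ∂μ
      = 2 * M * (∑ k, a k) + ∫ ω, ∑ m, ∑ j, (Noise ω m j) ^ 2 ∂μ := by
    have pm : ∀ m : Fin M, ∫ ω, ∑ j, (Y ω m j) ^ 2 ∂μ
        = 2 * (∑ k, a k) + ∫ ω, ∑ j, (Noise ω m j) ^ 2 ∂μ := by
      intro m
      rw [integral_finset_sum _ fun j _ => (key m j).1,
        integral_finset_sum _ fun j _ => hNsq m j,
        Fin.sum_univ_two, Fin.sum_univ_two, (key m 0).2, (key m 1).2]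
      ring
    rw [integral_finset_sum _ fun m _ => integrable_finset_sum _ fun j _ => (key m j).1,
      integral_finset_sum _ fun m _ => integrable_finset_sum _ fun j _ => hNsq m j,
      Finset.sum_congr rfl fun m _ => pm m, Finset.sum_add_distrib,
      Finset.sum_const, Finset.card_univ, Fintype.card_fin, nsmul_eq_mul]
    ring
  refine ⟨part1, ?_⟩
  -- second part
  intro S fk s hs hbddA hbddB hΔ ha'
  set Δ := maxSpread S fk with hΔdef
  set E := ∫ ω', ∑ m, ∑ j, (Noise ω' m j) ^ 2 ∂μ with hEdef
  set d := ∑ k, phiMin (S k) (fk k) with hddef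
  have hsub : Integrable (fun ω => (∑ m, ∑ j, (Y ω m j) ^ 2) - E) μ :=
    hQint.sub (integrable_const E)
  have hf : Integrable (fun ω => Δ / (2 * M * P) *
      ((∑ m, ∑ j, (Y ω m j) ^ 2) - E)) μ := hsub.const_mul _
  rw [integral_add hf (integrable_const d),
    integral_const_mul, integral_sub hQint (integrable_const E), integral_const,
    integral_const]
  simp only [measure_univ, ENNReal.toReal_one, smul_eq_mul, one_mul, probReal_univ]
  rw [part1]
  have hMne : (M : ℝ) ≠ 0 := Nat.cast_ne_zero.mpr hM.ne'
  have hΔne : Δ ≠ 0 := hΔ.ne'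
  have hsum : ∑ k, a k = P / Δ * ∑ k, (fk k (s k) - phiMin (S k) (fk k)) := by
    rw [Finset.mul_sum]
    exact Finset.sum_congr rfl fun k _ => ha' k
  have hval : Δ / (2 * M * P) * (2 * M * (∑ k, a k) + E - E)
      = ∑ k, (fk k (s k) - phiMin (S k) (fk k)) := by
    rw [add_sub_cancel_right, hsum]
    field_simp
  rw [hval, hddef, ← Finset.sum_add_distrib]
  exact Finset.sum_congr rfl fun k _ => by ring
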